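/- Let Š be as in the Hecke-condition setup (the GL-type graded braid matrix). Then Š satisfies the braid relation Š₁₂ Š₂₃ Š₁₂ = Š₂₃ Š₁₂ Š₂₃ in End(ℂ^N ⊗ ℂ^N ⊗ ℂ^N), where Š₁₂ = Š ⊗ id and Š₂₃ = id ⊗ Š. -/

import Mathlib

open Matrix

noncomputable def sEnt (N : ℕ) (p : Fin N → ℕ) (q : ℂ) (i k : Fin N) : ℂ :=
  if i < k then q - q⁻¹
  else if i = k then ((-1 : ℂ)) ^ (p i) * (if p i % 2 = 0 then q else q⁻¹)
  else 0

/-- The GL-type graded braid matrix. -/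
noncomputable def braidS (N : ℕ) (p : Fin N → ℕ) (q : ℂ) :
    Matrix (Fin N × Fin N) (Fin N × Fin N) ℂ :=
  fun r c =>
    (if r = c then sEnt N p q r.1 r.2 else 0) +
    (if r.1 = c.2 ∧ r.2 = c.1 ∧ r.1 ≠ r.2 then ((-1 : ℂ)) ^ (p r.1 * p r.2) else 0)

/-- `Š ⊗ id` on the triple tensor power. -/
noncomputable def S12 (N : ℕ) (p : Fin N → ℕ) (q : ℂ) :
    Matrix (Fin N × Fin N × Fin N) (Fin N × Fin N × Fin N) ℂ :=
  fun r c => braidS N p q (r.1, r.2.1) (c.1, c.2.1) * (if r.2.2 = c.2.2 then 1 else 0)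

/-- `id ⊗ Š` on the triple tensor power. -/
noncomputable def S23 (N : ℕ) (p : Fin N → ℕ) (q : ℂ) :
    Matrix (Fin N × Fin N × Fin N) (Fin N × Fin N × Fin N) ℂ :=
  fun r c => (if r.1 = c.1 then 1 else 0) * braidS N p q r.2 c.2

noncomputable def Gc (N : ℕ) (p : Fin N → ℕ) (i j : Fin N) : ℂ :=
  if i = j then 0 else ((-1 : ℂ)) ^ (p i * p j)

noncomputable def dd {N : ℕ} (x y : Fin N) : ℂ := if x = y then 1 else 0

lemma ite_and_one (P Q : Prop) [Decidable P] [Decidable Q] (r : ℂ) :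
    (if P ∧ Q then r else 0) = r * ((if P then (1 : ℂ) else 0) * (if Q then 1 else 0)) := by
  by_cases hP : P <;> by_cases hQ : Q <;> simp [hP, hQ]

section helpers

variable {N : ℕ} {p : Fin N → ℕ} {q : ℂ}

lemma braidS_apply (N : ℕ) (p : Fin N → ℕ) (q : ℂ) (i j a b : Fin N) :
    braidS N p q (i, j) (a, b) =
      (if a = i ∧ b = j then sEnt N p q i j else 0) +
      (if a = j ∧ b = i then Gc N p i j else 0) := by
  simp only [braidS, Gc, Prod.mk.injEq, Prod.ext_iff]
  congr 1
  · split_ifs with h1 h2 h2 <;> simp_all [eq_comm]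
  · split_ifs with h1 h2 h2 <;> simp_all [eq_comm]

lemma sEnt_lt {i j : Fin N} (h : i < j) : sEnt N p q i j = q - q⁻¹ := by simp [sEnt, h]

lemma sEnt_gt {i j : Fin N} (h : j < i) : sEnt N p q i j = 0 := by
  simp [sEnt, asymm h, h.ne']

lemma hecke (hq : q ≠ 0) (i : Fin N) :
    sEnt N p q i i * sEnt N p q i i = (q - q⁻¹) * sEnt N p q i i + 1 := by
  simp only [sEnt, lt_self_iff_false, if_false, if_pos rfl, ite_true]
  rcases Nat.mod_two_eq_zero_or_one (p i) with h | h
  · rw [if_pos h, (Nat.even_iff.mpr h).neg_one_pow]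
    field_simp
    ring
  · rw [if_neg (show ¬ p i % 2 = 0 by omega), (Nat.odd_iff.mpr h).neg_one_pow]
    field_simp
    ring

lemma Gc_mul_self {i j : Fin N} (h : i ≠ j) : Gc N p i j * Gc N p j i = 1 := by
  simp only [Gc, if_neg h, if_neg h.symm, Nat.mul_comm (p j) (p i), ← pow_add,
    ← two_mul]
  exact Even.neg_one_pow ⟨p i * p j, by ring⟩

lemma Gc_diag (i : Fin N) : Gc N p i i = 0 := by simp [Gc]

lemma innerB (i j k : Fin N) (h : i ≠ j) :
    sEnt N p q i j * sEnt N p q j k + sEnt N p q i k * sEnt N p q j i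
      = sEnt N p q j k * sEnt N p q i k := by
  rcases h.lt_or_gt with hij | hij
  · rw [sEnt_lt hij, sEnt_gt hij]
    rcases lt_trichotomy j k with hjk | rfl | hjk
    · rw [sEnt_lt hjk, sEnt_lt (hij.trans hjk)]; ring
    · rw [sEnt_lt hij]; ring
    · rw [sEnt_gt hjk]; ring
  · rw [sEnt_gt hij, sEnt_lt hij]
    rcases lt_trichotomy i k with hik | rfl | hik
    · rw [sEnt_lt hik, sEnt_lt (hij.trans hik)]; ring
    · rw [sEnt_lt hij]; ring
    · rw [sEnt_gt hik]; ring

lemma coeffB (i j k : Fin N) :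
    sEnt N p q i j * sEnt N p q j k * Gc N p i j + Gc N p i j * sEnt N p q i k * sEnt N p q j i
      = sEnt N p q j k * Gc N p i j * sEnt N p q i k := by
  rcases eq_or_ne i j with rfl | h
  · rw [Gc_diag]; ring
  · linear_combination Gc N p i j * innerB i j k h

lemma innerC (i j k : Fin N) (h : j ≠ k) :
    sEnt N p q i j * sEnt N p q i k
      = sEnt N p q j k * sEnt N p q i j + sEnt N p q i k * sEnt N p q k j := by
  rcases h.lt_or_gt with hjk | hjk
  · rw [sEnt_lt hjk, sEnt_gt hjk]
    rcases lt_trichotomy i j with hij | rfl | hij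
    · rw [sEnt_lt hij, sEnt_lt (hij.trans hjk)]; ring
    · rw [sEnt_lt hjk]; ring
    · rw [sEnt_gt hij]; ring
  · rw [sEnt_gt hjk, sEnt_lt hjk]
    rcases lt_trichotomy i k with hik | rfl | hik
    · rw [sEnt_lt hik, sEnt_lt (hik.trans hjk)]; ring
    · rw [sEnt_lt hjk]; ring
    · rw [sEnt_gt hik]; ring

lemma coeffC (i j k : Fin N) :
    sEnt N p q i j * Gc N p j k * sEnt N p q i k
      = sEnt N p q j k * sEnt N p q i j * Gc N p j k
        + Gc N p j k * sEnt N p q i k * sEnt N p q k j := by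
  rcases eq_or_ne j k with rfl | h
  · rw [Gc_diag]; ring
  · linear_combination Gc N p j k * innerC i j k h

lemma coeffA (hq : q ≠ 0) (i j k : Fin N) :
    sEnt N p q i j * sEnt N p q i j * sEnt N p q j k
      + Gc N p i j * Gc N p j i * sEnt N p q i k
      = sEnt N p q j k * sEnt N p q j k * sEnt N p q i j
        + Gc N p j k * Gc N p k j * sEnt N p q i k := by
  rcases eq_or_ne i j with rfl | hij
  · rw [Gc_diag]
    rcases eq_or_ne i k with rfl | hik
    · rw [Gc_diag]; try ring
    · rw [Gc_mul_self hik]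
      rcases hik.lt_or_gt with h | h
      · rw [sEnt_lt h]
        try linear_combination (q - q⁻¹) * hecke hq i
      · rw [sEnt_gt h]; ring
  · rcases eq_or_ne j k with rfl | hjk
    · rw [Gc_diag, Gc_mul_self hij]
      rcases hij.lt_or_gt with h | h
      · rw [sEnt_lt h]
        try linear_combination (q⁻¹ - q) * hecke hq j
      · rw [sEnt_gt h]; ring
    · rw [Gc_mul_self hij, Gc_mul_self hjk]
      rcases hij.lt_or_gt with h1 | h1 <;> rcases hjk.lt_or_gt with h2 | h2
      · rw [sEnt_lt h1, sEnt_lt h2]; try ring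
      · rw [sEnt_lt h1, sEnt_gt h2]; try ring
      · rw [sEnt_gt h1, sEnt_lt h2]; try ring
      · rw [sEnt_gt h1, sEnt_gt h2]; try ring

lemma mulS12 (N : ℕ) (p : Fin N → ℕ) (q : ℂ)
    (M : Matrix (Fin N × Fin N × Fin N) (Fin N × Fin N × Fin N) ℂ)
    (i j k : Fin N) (d : Fin N × Fin N × Fin N) :
    (S12 N p q * M) (i, j, k) d =
      sEnt N p q i j * M (i, j, k) d + Gc N p i j * M (j, i, k) d := by
  rw [Matrix.mul_apply, Fintype.sum_prod_type]
  simp only [Fintype.sum_prod_type, S12, braidS_apply, ite_and]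
  simp [Finset.sum_ite_eq, Finset.sum_ite_eq', add_mul, ite_mul, Finset.sum_add_distrib,
    mul_ite, mul_zero, zero_mul, mul_one]

lemma mulS23 (N : ℕ) (p : Fin N → ℕ) (q : ℂ)
    (M : Matrix (Fin N × Fin N × Fin N) (Fin N × Fin N × Fin N) ℂ)
    (i j k : Fin N) (d : Fin N × Fin N × Fin N) :
    (S23 N p q * M) (i, j, k) d =
      sEnt N p q j k * M (i, j, k) d + Gc N p j k * M (i, k, j) d := by
  rw [Matrix.mul_apply, Fintype.sum_prod_type]
  simp only [Fintype.sum_prod_type, S23, braidS_apply, ite_and]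
  simp [Finset.sum_ite_eq, Finset.sum_ite_eq', add_mul, ite_mul, Finset.sum_add_distrib,
    mul_ite, mul_zero, zero_mul, mul_one, one_mul]

lemma S12_apply (N : ℕ) (p : Fin N → ℕ) (q : ℂ) (x y z a b c : Fin N) :
    S12 N p q (x, y, z) (a, b, c) =
      sEnt N p q x y * (dd a x * dd b y * dd c z)
        + Gc N p x y * (dd a y * dd b x * dd c z) := by
  simp only [S12, braidS_apply, dd, ite_and_one]
  rw [show (if z = c then (1 : ℂ) else 0) = (if c = z then 1 else 0) by simp [eq_comm]]
  ring

lemma S23_apply (N : ℕ) (p : Fin N → ℕ) (q : ℂ) (x y z a b c : Fin N) :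
    S23 N p q (x, y, z) (a, b, c) =
      sEnt N p q y z * (dd a x * dd b y * dd c z)
        + Gc N p y z * (dd a x * dd b z * dd c y) := by
  simp only [S23, braidS_apply, dd, ite_and_one]
  rw [show (if x = a then (1 : ℂ) else 0) = (if a = x then 1 else 0) by simp [eq_comm]]
  ring

end helpers

/-- the GL-type graded braid matrix satisfies the braid relation
`Š₁₂ Š₂₃ Š₁₂ = Š₂₃ Š₁₂ Š₂₃`. -/
theorem braidS_braid_relation (N : ℕ) (hN : 1 ≤ N) (p : Fin N → ℕ)
    (hp : ∀ i, p i ≤ 1) (q : ℂ) (hq : q ≠ 0) (hq2 : q ^ 2 ≠ 1) :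
    S12 N p q * S23 N p q * S12 N p q = S23 N p q * S12 N p q * S23 N p q := by
  apply Matrix.ext
  rintro ⟨i, j, k⟩ ⟨a, b, c⟩
  rw [Matrix.mul_assoc, Matrix.mul_assoc]
  simp only [mulS12, mulS23, S12_apply, S23_apply]
  linear_combination (dd a i * dd b j * dd c k) * coeffA hq i j k
    + (dd a j * dd b i * dd c k) * coeffB i j k
    + (dd a i * dd b k * dd c j) * coeffC i j k
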